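/- Let E : ℝⁿ × ℝᵖ → ℝ be twice continuously differentiable and symmetric in the following sense: fix θ and suppose s_β solves ∇ₛE(s_β, θ) + β δ = 0 for a fixed vector δ ∈ ℝⁿ, with β ↦ s_β differentiable at 0 and H := ∇²ₛE(s₀, θ) invertible and symmetric. Then the centered finite-difference EP estimate converges to the exact directional quantity: lim_{β→0} (1/(2β)) (∇_θ E(s_β, θ) − ∇_θ E(s_{−β}, θ)) = −∂²_{θ,s}E(s₀, θ) · H⁻¹ · δ. -/

import Mathlib

open scoped RealInnerProductSpace

noncomputable section

abbrev Euc (n : ℕ) := EuclideanSpace ℝ (Fin n)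

open InnerProductSpace in
/-- The gradient of a `C²` function is differentiable. -/
lemma aux_grad_diff {m : ℕ} (f : Euc m → ℝ) (hf : ContDiff ℝ 2 f) (x0 : Euc m) :
    DifferentiableAt ℝ (fun x => gradient f x) x0 := by
  have h1 : DifferentiableAt ℝ (fun x => fderiv ℝ f x) x0 :=
    ((hf.fderiv_right (by norm_num : (1:WithTop ℕ∞) + 1 ≤ 2)).differentiable one_ne_zero).differentiableAt
  have h2 : (fun x => gradient f x)
      = (toDual ℝ (Euc m)).symm.toContinuousLinearEquiv ∘ (fun x => fderiv ℝ f x) := rfl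
  rw [h2]
  exact ((toDual ℝ (Euc m)).symm.toContinuousLinearEquiv.differentiableAt).comp x0 h1

open InnerProductSpace in
/-- The gradient in the second variable, as a function of the first, is differentiable. -/
lemma aux_grad_diff2 {n p : ℕ} (E : Euc n → Euc p → ℝ)
    (hE : ContDiff ℝ 2 (Function.uncurry E)) (θ : Euc p) (x0 : Euc n) :
    DifferentiableAt ℝ (fun x => gradient (fun θ' => E x θ') θ) x0 := by
  have hdiff : Differentiable ℝ (Function.uncurry E) := hE.differentiable (by norm_num)
  have key : ∀ x : Euc n, gradient (fun θ' => E x θ') θ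
      = (toDual ℝ (Euc p)).symm
          ((fderiv ℝ (Function.uncurry E) (x, θ)).comp
            (ContinuousLinearMap.inr ℝ (Euc n) (Euc p))) := by
    intro x
    have h1 : HasFDerivAt (Function.uncurry E)
        (fderiv ℝ (Function.uncurry E) (x, θ)) (x, θ) := (hdiff (x, θ)).hasFDerivAt
    have h2 : HasFDerivAt (fun θ' : Euc p => E x θ')
        ((fderiv ℝ (Function.uncurry E) (x, θ)).comp
          (ContinuousLinearMap.inr ℝ (Euc n) (Euc p))) θ :=
      h1.comp θ (hasFDerivAt_prodMk_right x θ)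
    show (toDual ℝ (Euc p)).symm (fderiv ℝ (fun θ' => E x θ') θ) = _
    rw [h2.fderiv]
  have h3 : DifferentiableAt ℝ
      (fun x : Euc n => fderiv ℝ (Function.uncurry E) (x, θ)) x0 := by
    have := ((hE.fderiv_right (by norm_num : (1:WithTop ℕ∞) + 1 ≤ 2)).differentiable
      one_ne_zero).differentiableAt (x := (x0, θ))
    exact this.comp x0 (differentiableAt_id.prodMk (differentiableAt_const θ))
  have h4 : DifferentiableAt ℝ (fun x : Euc n =>
      (fderiv ℝ (Function.uncurry E) (x, θ)).comp
        (ContinuousLinearMap.inr ℝ (Euc n) (Euc p))) x0 :=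
    h3.clm_comp (differentiableAt_const _)
  have h5 : (fun x => gradient (fun θ' => E x θ') θ)
      = (toDual ℝ (Euc p)).symm.toContinuousLinearEquiv ∘ (fun x : Euc n =>
          (fderiv ℝ (Function.uncurry E) (x, θ)).comp
            (ContinuousLinearMap.inr ℝ (Euc n) (Euc p))) := by
    funext x; exact key x
  rw [h5]
  exact ((toDual ℝ (Euc p)).symm.toContinuousLinearEquiv.differentiableAt).comp x0 h4

/-- Centered difference quotient converges to the derivative. -/
lemma aux_centered {m : ℕ} (g : ℝ → Euc m) (L : Euc m) (hg : HasDerivAt g L 0) :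
    Filter.Tendsto (fun β : ℝ => (2 * β)⁻¹ • (g β - g (-β)))
      (nhdsWithin 0 {(0:ℝ)}ᶜ) (nhds L) := by
  have hslope : Filter.Tendsto (slope g 0) (nhdsWithin 0 {(0:ℝ)}ᶜ) (nhds L) :=
    hasDerivAt_iff_tendsto_slope.mp hg
  have hneg : Filter.Tendsto (fun β : ℝ => -β) (nhdsWithin 0 {(0:ℝ)}ᶜ)
      (nhdsWithin 0 {(0:ℝ)}ᶜ) := by
    apply Filter.Tendsto.inf
    · simpa using (continuous_neg.tendsto (0:ℝ))
    · apply Filter.tendsto_principal.mpr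
      rw [Filter.eventually_principal]
      intro β hβ
      simp only [Set.mem_compl_iff, Set.mem_singleton_iff] at hβ ⊢
      exact fun h => hβ (neg_eq_zero.mp h)
  have hslope2 : Filter.Tendsto (fun β => slope g 0 (-β)) (nhdsWithin 0 {(0:ℝ)}ᶜ)
      (nhds L) := hslope.comp hneg
  have hsum := (hslope.const_smul ((1:ℝ)/2)).add (hslope2.const_smul ((1:ℝ)/2))
  have hval : ((1:ℝ)/2) • L + ((1:ℝ)/2) • L = L := by
    rw [← add_smul]; norm_num
  rw [hval] at hsum
  refine hsum.congr (fun β => ?_)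
  simp only [slope_def_module, sub_zero, vsub_eq_sub]
  rw [smul_smul, smul_smul, inv_neg, mul_inv]
  match_scalars <;> ring

/-- Correctness of the centered EP (C-EP) estimate:
`lim_{β→0} (1/(2β)) (∇_θ E(s_β, θ) − ∇_θ E(s_{−β}, θ)) = −∂²_{θ,s}E(s₀, θ)·H⁻¹·δ`. -/
theorem stmt_5 {n p : ℕ}
    (E : Euc n → Euc p → ℝ) (hE : ContDiff ℝ 2 (Function.uncurry E))
    (θ : Euc p) (δ : Euc n)
    (s : ℝ → Euc n) (hs : DifferentiableAt ℝ s 0)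
    (ε : ℝ) (hε : 0 < ε)
    (hnudge : ∀ β ∈ Set.Ioo (-ε) ε,
      gradient (fun s' => E s' θ) (s β) + β • δ = 0)
    (H Hinv : Euc n →L[ℝ] Euc n)
    (hH : H = fderiv ℝ (fun s' => gradient (fun s'' => E s'' θ) s') (s 0))
    (hsym : ∀ u v, ⟪H u, v⟫ = ⟪u, H v⟫)
    (h1 : Hinv.comp H = ContinuousLinearMap.id ℝ (Euc n))
    (h2 : H.comp Hinv = ContinuousLinearMap.id ℝ (Euc n)) :
    Filter.Tendsto
      (fun β : ℝ => (2 * β)⁻¹ •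
        (gradient (fun θ' => E (s β) θ') θ - gradient (fun θ' => E (s (-β)) θ') θ))
      (nhdsWithin 0 {(0 : ℝ)}ᶜ)
      (nhds (-((fderiv ℝ (fun s' => gradient (fun θ' => E s' θ') θ) (s 0))
        (Hinv δ)))) := by
  set G : Euc n → Euc p := fun x => gradient (fun θ' => E x θ') θ with hGdef
  set G2 : Euc n → Euc n := fun x => gradient (fun s'' => E s'' θ) x with hG2def
  -- differentiability of G2 (gradient in first variable)
  have hEfst : ContDiff ℝ 2 (fun x : Euc n => E x θ) := by
    have : (fun x : Euc n => E x θ) = Function.uncurry E ∘ (fun x => (x, θ)) := rfl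
    rw [this]
    exact hE.comp (contDiff_id.prodMk contDiff_const)
  have hG2diff : DifferentiableAt ℝ G2 (s 0) := aux_grad_diff _ hEfst (s 0)
  have hGdiff : DifferentiableAt ℝ G (s 0) := aux_grad_diff2 E hE θ (s 0)
  -- the derivative of s at 0
  set v : Euc n := deriv s 0 with hvdef
  have hsv : HasDerivAt s v 0 := hs.hasDerivAt
  -- F := β ↦ G2 (s β) + β • δ vanishes near 0
  have hF0 : (fun β : ℝ => G2 (s β) + β • δ) =ᶠ[nhds 0] (fun _ => (0 : Euc n)) := by
    have hmem : Set.Ioo (-ε) ε ∈ nhds (0:ℝ) := Ioo_mem_nhds (by linarith) hε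
    filter_upwards [hmem] with β hβ
    exact hnudge β hβ
  have hFd : HasDerivAt (fun β : ℝ => G2 (s β) + β • δ)
      ((fderiv ℝ G2 (s 0)) v + δ) 0 := by
    have hc : HasDerivAt (fun β : ℝ => G2 (s β)) ((fderiv ℝ G2 (s 0)) v) 0 :=
      hG2diff.hasFDerivAt.comp_hasDerivAt 0 hsv
    have hl : HasDerivAt (fun β : ℝ => β • δ) δ 0 := by
      simpa using (hasDerivAt_id (0:ℝ)).smul_const δ
    exact hc.add hl
  have hFd0 : HasDerivAt (fun β : ℝ => G2 (s β) + β • δ) 0 0 := by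
    have : HasDerivAt (fun _ : ℝ => (0 : Euc n)) 0 0 := hasDerivAt_const 0 0
    exact this.congr_of_eventuallyEq hF0
  have hHv : H v + δ = 0 := by
    have := hFd.unique hFd0
    rw [hH]
    exact this
  have hv : v = -(Hinv δ) := by
    have h3 : H v = -δ := by
      have := hHv
      linear_combination (norm := module) this
    have h4 : Hinv (H v) = v := by
      have := congrArg (fun f => f v) h1
      simpa using this
    rw [h3] at h4
    rw [← h4]
    simp
  -- g := β ↦ G (s β)
  have hg : HasDerivAt (fun β : ℝ => G (s β)) ((fderiv ℝ G (s 0)) v) 0 :=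
    hGdiff.hasFDerivAt.comp_hasDerivAt 0 hsv
  have hval : (fderiv ℝ G (s 0)) v
      = -((fderiv ℝ (fun s' => gradient (fun θ' => E s' θ') θ) (s 0)) (Hinv δ)) := by
    rw [hv]
    simp [hGdef]
  rw [← hval]
  exact aux_centered (fun β => G (s β)) _ hg
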